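/- Let O be a complete discrete valuation ring with maximal ideal 𝔪, and let F ∈ O[X] be a distinguished polynomial, i.e. F is monic and all of its coefficients other than the leading one lie in 𝔪. Then the natural O-algebra homomorphism O[X]⧸(F) → O⟦X⟧⧸(F) is an isomorphism; in particular, O⟦X⟧⧸(F) is a free O-module of rank deg F, with O-basis given by the images of 1, X, …, X^{deg F − 1}. -/

import Mathlib

open Polynomial PowerSeries

namespace StmtAux

variable {O : Type*} [CommRing O]

/-- Shift a power series down by `n`. -/
noncomputable def T (n : ℕ) (h : PowerSeries O) : PowerSeries O :=
  PowerSeries.mk fun k => PowerSeries.coeff (k + n) h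

@[simp] lemma coeff_T (n j : ℕ) (h : PowerSeries O) :
    PowerSeries.coeff j (T n h) = PowerSeries.coeff (j + n) h := by
  simp [T]

lemma T_sub (n : ℕ) (a b : PowerSeries O) : T n (a - b) = T n a - T n b := by
  ext j; simp [T]

lemma decomp (n : ℕ) (h : PowerSeries O) :
    h = ((PowerSeries.trunc n h : O[X]) : PowerSeries O) + PowerSeries.X ^ n * T n h := by
  ext k
  rw [map_add, Polynomial.coeff_coe, PowerSeries.coeff_trunc, PowerSeries.coeff_X_pow_mul']
  by_cases hk : k < n
  · simp [hk, not_le.mpr hk]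
  · rw [if_neg hk, if_pos (not_lt.mp hk), coeff_T, zero_add,
      Nat.sub_add_cancel (not_lt.mp hk)]

lemma coeff_mul_mem {I : Ideal O} {m : ℕ} {a b : PowerSeries O}
    (ha : ∀ j, PowerSeries.coeff j a ∈ I ^ m) (hb : ∀ j, PowerSeries.coeff j b ∈ I)
    (j : ℕ) : PowerSeries.coeff j (a * b) ∈ I ^ (m + 1) := by
  rw [PowerSeries.coeff_mul]
  refine Ideal.sum_mem _ fun p _ => ?_
  rw [pow_succ]
  exact Ideal.mul_mem_mul (ha _) (hb _)

lemma smul_top_eq (I : Ideal O) (m : ℕ) : (I ^ m • ⊤ : Submodule O O) = I ^ m := by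
  rw [smul_eq_mul, Ideal.mul_top]

lemma exists_wdiv (I : Ideal O) [IsAdicComplete I O] (n : ℕ) (P : PowerSeries O)
    (hP : ∀ j, PowerSeries.coeff j P ∈ I) (g : PowerSeries O) :
    ∃ (q : PowerSeries O) (r : O[X]), r.degree < n ∧
      g = q * (PowerSeries.X ^ n - P) + (r : PowerSeries O) := by
  set q : ℕ → PowerSeries O := fun m =>
    Nat.rec 0 (fun _ qm => T n (g + qm * P)) m with hq
  have hqs : ∀ m, q (m + 1) = T n (g + q m * P) := fun m => rfl
  have hA : ∀ m j, PowerSeries.coeff j (q (m + 1) - q m) ∈ I ^ m := by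
    intro m
    induction m with
    | zero => intro j; simp [Ideal.one_eq_top]
    | succ m ih =>
      intro j
      have h2 : q (m + 2) - q (m + 1) = T n ((q (m + 1) - q m) * P) := by
        rw [hqs (m + 1), hqs m, ← T_sub]
        ring_nf
      rw [h2, coeff_T]
      exact coeff_mul_mem ih hP _
  have hB : ∀ m m', m ≤ m' → ∀ j, PowerSeries.coeff j (q m' - q m) ∈ I ^ m := by
    intro m m' h
    induction m', h using Nat.le_induction with
    | base => intro j; simp
    | succ m' hm ih =>
      intro j
      have h3 : q (m' + 1) - q m = (q (m' + 1) - q m') + (q m' - q m) := by ring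
      rw [h3, map_add]
      exact Ideal.add_mem _ (Ideal.pow_le_pow_right hm (hA m' j)) (ih j)
  have hsmod : ∀ j, ∃ L : O, ∀ m,
      PowerSeries.coeff j (q m) ≡ L [SMOD (I ^ m • ⊤ : Submodule O O)] := by
    intro j
    refine IsPrecomplete.prec inferInstance ?_
    intro m m' h
    rw [SModEq.sub_mem, smul_top_eq]
    have := hB m m' h j
    rw [map_sub] at this
    simpa using neg_mem this
  choose L hL using hsmod
  set qlim : PowerSeries O := PowerSeries.mk L with hqlim
  have hC : ∀ m j, PowerSeries.coeff j (qlim - q m) ∈ I ^ m := by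
    intro m j
    have := hL j m
    rw [SModEq.sub_mem, smul_top_eq] at this
    have h4 : PowerSeries.coeff j (qlim - q m) =
        -(PowerSeries.coeff j (q m) - L j) := by
      rw [map_sub, hqlim, PowerSeries.coeff_mk]; ring
    rw [h4]
    exact neg_mem this
  have hC' : ∀ m j, PowerSeries.coeff j (q m - qlim) ∈ I ^ m := by
    intro m j
    have := hC m j
    rw [map_sub] at this ⊢
    simpa using neg_mem this
  have hfix : qlim = T n (g + qlim * P) := by
    ext j
    have key : ∀ m, PowerSeries.coeff j (qlim - T n (g + qlim * P)) ∈ I ^ m := by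
      intro m
      have h1 : PowerSeries.coeff j (qlim - q (m + 1)) ∈ I ^ (m + 1) := hC (m + 1) j
      have h2 : q (m + 1) - T n (g + qlim * P) = T n ((q m - qlim) * P) := by
        rw [hqs m, ← T_sub]
        ring_nf
      have h3 : PowerSeries.coeff j (q (m + 1) - T n (g + qlim * P)) ∈ I ^ (m + 1) := by
        rw [h2, coeff_T]
        exact coeff_mul_mem (hC' m) hP _
      have h5 : qlim - T n (g + qlim * P) =
          (qlim - q (m + 1)) + (q (m + 1) - T n (g + qlim * P)) := by ring
      rw [h5, map_add]
      exact Ideal.pow_le_pow_right (Nat.le_succ m) (Ideal.add_mem _ h1 h3)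
    have h6 : PowerSeries.coeff j (qlim - T n (g + qlim * P)) = 0 := by
      refine IsHausdorff.haus (inferInstance : IsHausdorff I O) _ fun m => ?_
      rw [SModEq.zero, smul_top_eq]
      exact key m
    rw [map_sub] at h6
    exact sub_eq_zero.mp h6
  refine ⟨qlim, PowerSeries.trunc n (g + qlim * P), PowerSeries.degree_trunc_lt _ _, ?_⟩
  have hdec := decomp n (g + qlim * P)
  rw [← hfix] at hdec
  linear_combination hdec

lemma wdiv_unique (I : Ideal O) [IsAdicComplete I O] (n : ℕ) (P : PowerSeries O)
    (hP : ∀ j, PowerSeries.coeff j P ∈ I) (q : PowerSeries O) (r : O[X])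
    (hr : r.degree < (n : WithBot ℕ))
    (h : (r : PowerSeries O) = q * (PowerSeries.X ^ n - P)) : q = 0 ∧ r = 0 := by
  have hq : ∀ m j, PowerSeries.coeff j q ∈ I ^ m := by
    intro m
    induction m with
    | zero => intro j; simp [Ideal.one_eq_top]
    | succ m ih =>
      intro j
      have hXq : (r : PowerSeries O) + q * P = PowerSeries.X ^ n * q := by
        rw [h]; ring
      have h1 : PowerSeries.coeff j q =
          PowerSeries.coeff (j + n) (r : PowerSeries O) +
            PowerSeries.coeff (j + n) (q * P) := by
        rw [← map_add, hXq, PowerSeries.coeff_X_pow_mul]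
      have h2 : PowerSeries.coeff (j + n) (r : PowerSeries O) = 0 := by
        rw [Polynomial.coeff_coe]
        exact Polynomial.coeff_eq_zero_of_degree_lt
          (lt_of_lt_of_le hr (by exact_mod_cast Nat.le_add_left n j))
      rw [h1, h2, zero_add]
      exact coeff_mul_mem ih hP _
  have hq0 : q = 0 := by
    ext j
    rw [map_zero]
    refine IsHausdorff.haus (inferInstance : IsHausdorff I O) _ fun m => ?_
    rw [SModEq.zero, smul_top_eq]
    exact hq m j
  refine ⟨hq0, ?_⟩
  have : (r : PowerSeries O) = 0 := by rw [h, hq0, zero_mul]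
  exact_mod_cast this

end StmtAux

set_option maxHeartbeats 1000000 in
set_option synthInstance.maxHeartbeats 400000 in
/-- Let `O` be a complete discrete valuation ring with maximal ideal `𝔪` and let
`F ∈ O[X]` be a distinguished polynomial (monic, all non-leading coefficients in `𝔪`).
Then the natural `O`-algebra map `O[X]⧸(F) → O⟦X⟧⧸(F)` is an isomorphism; in particular
`O⟦X⟧⧸(F)` is a free `O`-module of rank `deg F` with basis the images of
`1, X, …, X^(deg F − 1)`. -/
theorem stmt_8 (O : Type*) [CommRing O] [IsDomain O] [IsDiscreteValuationRing O]
    [IsAdicComplete (IsLocalRing.maximalIdeal O) O]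
    (F : Polynomial O) (hmonic : F.Monic)
    (hdist : ∀ i < F.natDegree, F.coeff i ∈ IsLocalRing.maximalIdeal O) :
    Function.Bijective
      ((Ideal.quotientMap (I := Ideal.span {F}) (Ideal.span {(F : PowerSeries O)})
        (Polynomial.coeToPowerSeries.ringHom : O[X] →+* PowerSeries O)
        (by
          rw [Ideal.span_le, Set.singleton_subset_iff]
          exact Ideal.mem_comap.mpr (by
            rw [Polynomial.coeToPowerSeries.ringHom_apply]
            exact Ideal.subset_span rfl))) :
        O[X] ⧸ Ideal.span {F} →+* PowerSeries O ⧸ Ideal.span {(F : PowerSeries O)}) ∧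
    ∃ b : Module.Basis (Fin F.natDegree) O
        (PowerSeries O ⧸ Ideal.span {(F : PowerSeries O)}),
      ∀ i : Fin F.natDegree,
        b i = Ideal.Quotient.mk (Ideal.span {(F : PowerSeries O)})
          ((PowerSeries.X : PowerSeries O) ^ (i : ℕ)) := by
  set I := IsLocalRing.maximalIdeal O with hI
  set n := F.natDegree with hn
  set P : O[X] := Polynomial.X ^ n - F with hPdef
  have hPc : ∀ j, PowerSeries.coeff j (P : PowerSeries O) ∈ I := by
    intro j
    rw [Polynomial.coeff_coe, hPdef, Polynomial.coeff_sub, Polynomial.coeff_X_pow]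
    rcases lt_trichotomy j n with h | h | h
    · rw [if_neg h.ne, zero_sub]
      exact neg_mem (hdist j h)
    · rw [if_pos h, h, hmonic.coeff_natDegree, sub_self]
      exact zero_mem _
    · rw [if_neg h.ne', Polynomial.coeff_eq_zero_of_natDegree_lt h, zero_sub, neg_zero]
      exact zero_mem _
  have hF : (F : PowerSeries O) = PowerSeries.X ^ n - (P : PowerSeries O) := by
    rw [hPdef]
    push_cast
    ring
  set φ := (Ideal.quotientMap (I := Ideal.span {F}) (Ideal.span {(F : PowerSeries O)})
        (Polynomial.coeToPowerSeries.ringHom : O[X] →+* PowerSeries O)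
        (by
          rw [Ideal.span_le, Set.singleton_subset_iff]
          exact Ideal.mem_comap.mpr (by
            rw [Polynomial.coeToPowerSeries.ringHom_apply]
            exact Ideal.subset_span rfl))) with hφ
  have hφmk : ∀ p : O[X], φ (Ideal.Quotient.mk _ p) =
      Ideal.Quotient.mk (Ideal.span {(F : PowerSeries O)}) (p : PowerSeries O) := by
    intro p
    rw [hφ, Ideal.quotientMap_mk, Polynomial.coeToPowerSeries.ringHom_apply]
  have hbij : Function.Bijective φ := by
    constructor
    · have hker : ∀ x, φ x = 0 → x = 0 := by
        intro x hx
        obtain ⟨p, rfl⟩ := Ideal.Quotient.mk_surjective x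
        rw [hφmk, Ideal.Quotient.eq_zero_iff_mem, Ideal.mem_span_singleton] at hx
        obtain ⟨c, hc⟩ := hx
        have hmod := Polynomial.modByMonic_add_div p F
        have hdeg : (p %ₘ F).degree < (n : WithBot ℕ) := by
          have := Polynomial.degree_modByMonic_lt p hmonic
          rwa [Polynomial.degree_eq_natDegree hmonic.ne_zero] at this
        have hmodc := congrArg (Polynomial.coeToPowerSeries.ringHom (R := O)) hmod
        simp only [map_add, map_mul, Polynomial.coeToPowerSeries.ringHom_apply] at hmodc
        have heq : ((p %ₘ F : O[X]) : PowerSeries O) =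
            (c - ((p /ₘ F : O[X]) : PowerSeries O)) *
              (PowerSeries.X ^ n - (P : PowerSeries O)) := by
          rw [← hF]
          linear_combination hmodc + hc
        obtain ⟨hq0, hr0⟩ := StmtAux.wdiv_unique I n (P : PowerSeries O) hPc _ _ hdeg heq
        rw [Ideal.Quotient.eq_zero_iff_mem, Ideal.mem_span_singleton]
        exact (Polynomial.modByMonic_eq_zero_iff_dvd hmonic).mp hr0
      intro a b hab
      have h7 : φ (a - b) = 0 := by rw [φ.map_sub, hab, sub_self]
      exact sub_eq_zero.mp (hker _ h7)
    · intro y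
      obtain ⟨g, rfl⟩ := Ideal.Quotient.mk_surjective y
      obtain ⟨q, r, hrdeg, hgr⟩ := StmtAux.exists_wdiv I n (P : PowerSeries O) hPc g
      refine ⟨Ideal.Quotient.mk _ r, ?_⟩
      rw [hφmk, Ideal.Quotient.mk_eq_mk_iff_sub_mem, Ideal.mem_span_singleton]
      refine ⟨-q, ?_⟩
      rw [hF]
      linear_combination -hgr
  refine ⟨hbij, ?_⟩
  have hsmul : ∀ (a : O) (x : O[X] ⧸ Ideal.span {F}), φ (a • x) = a • φ x := by
    intro a x
    obtain ⟨p, rfl⟩ := Ideal.Quotient.mk_surjective x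
    have l1 : a • (Ideal.Quotient.mk (Ideal.span {F}) p) =
        Ideal.Quotient.mk (Ideal.span {F}) (a • p) := rfl
    have l2 : ∀ g : PowerSeries O,
        a • (Ideal.Quotient.mk (Ideal.span {(F : PowerSeries O)}) g) =
          Ideal.Quotient.mk (Ideal.span {(F : PowerSeries O)}) (a • g) := fun g => rfl
    rw [l1, hφmk, hφmk, l2]
    try rfl
  let L : (O[X] ⧸ Ideal.span {F}) ≃ₗ[O]
      (PowerSeries O ⧸ Ideal.span {(F : PowerSeries O)}) :=
    { Equiv.ofBijective φ hbij with
      map_add' := φ.map_add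
      map_smul' := hsmul }
  let pb := AdjoinRoot.powerBasis' hmonic
  refine ⟨pb.basis.map L, fun i => ?_⟩
  erw [Module.Basis.map_apply]
  have hbp : pb.basis i = pb.gen ^ (i : ℕ) := pb.basis_eq_pow i
  have hgen : pb.gen = Ideal.Quotient.mk (Ideal.span {F}) Polynomial.X := rfl
  have hx : pb.gen ^ (i : ℕ) =
      Ideal.Quotient.mk (Ideal.span {F}) (Polynomial.X ^ (i : ℕ)) := by
    erw [hgen, ← (Ideal.Quotient.mk (Ideal.span {F})).map_pow]
  refine Eq.trans (congrArg L (hbp.trans hx)) ?_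
  show φ (Ideal.Quotient.mk (Ideal.span {F}) (Polynomial.X ^ (i : ℕ))) = _
  rw [hφmk, Polynomial.coe_pow, Polynomial.coe_X]
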